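/- Let A be a p×p nonnegative definite Hermitian matrix with Hermitian square root A^{1/2}, B an n×n nonnegative definite Hermitian matrix, H a p×p complex matrix, and z ∈ ℂ⁺ with v = Im z. For a p×n complex matrix X define C(X) = √(n/p)(n^{-1}A^{1/2}XBX*A^{1/2} − n^{-1}tr(B)·A). If X and X′ are p×n matrices that differ in at most one row, then |p^{-1}tr((C(X) − zI)^{-1}H) − p^{-1}tr((C(X′) − zI)^{-1}H)| ≤ 6‖H‖/(pv). -/

import Mathlib

open MeasureTheory Filter Matrix
open scoped ENNReal BigOperators Classical ComplexOrder

/-- The operator (spectral) norm of a complex matrix. -/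
noncomputable def opNorm {m n : ℕ} (M : Matrix (Fin m) (Fin n) ℂ) : ℝ :=
  ‖LinearMap.toContinuousLinearMap (Matrix.toEuclideanLin M)‖

/-- The positive semidefinite square root of a positive semidefinite matrix
(the definition `Matrix.PosSemidef.sqrt` of the older Mathlib, which has since been removed). -/
noncomputable def Matrix.PosSemidef.sqrt {m : ℕ} {A : Matrix (Fin m) (Fin m) ℂ} (hA : A.PosSemidef) :
    Matrix (Fin m) (Fin m) ℂ :=
  hA.1.eigenvectorUnitary.1 * diagonal ((↑) ∘ (√·) ∘ hA.1.eigenvalues) *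
  (star hA.1.eigenvectorUnitary : Matrix (Fin m) (Fin m) ℂ)

/-- The renormalized sample covariance matrix
`C(X) = √(n/p) (n⁻¹ A^{1/2} X B X* A^{1/2} − n⁻¹ tr(B) A)`,
where `A^{1/2}` is the (Hermitian, positive semidefinite) square root of `A`. -/
noncomputable def renormCov {p n : ℕ} (A : Matrix (Fin p) (Fin p) ℂ) (hA : A.PosSemidef)
    (B : Matrix (Fin n) (Fin n) ℂ) (X : Matrix (Fin p) (Fin n) ℂ) :
    Matrix (Fin p) (Fin p) ℂ :=
  (Real.sqrt ((n : ℝ) / p) : ℂ) •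
    ((n : ℂ)⁻¹ • (hA.sqrt * X * B * Xᴴ * hA.sqrt) - ((n : ℂ)⁻¹ * B.trace) • A)

section Aux

open scoped Matrix.Norms.L2Operator

lemma opNorm_eq_l2norm {m n : ℕ} (M : Matrix (Fin m) (Fin n) ℂ) : opNorm M = ‖M‖ := rfl

lemma trace_le_rank_mul_opNorm {p : ℕ}
    (T : EuclideanSpace ℂ (Fin p) →ₗ[ℂ] EuclideanSpace ℂ (Fin p)) :
    ‖LinearMap.trace ℂ _ T‖ ≤
      (Module.finrank ℂ (LinearMap.range T)) * ‖LinearMap.toContinuousLinearMap T‖ := by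
  classical
  set V := LinearMap.range T with hV
  let T₀ : (EuclideanSpace ℂ (Fin p)) →ₗ[ℂ] V :=
    T.codRestrict V (fun x => LinearMap.mem_range_self T x)
  have hT : T = V.subtype ∘ₗ T₀ := rfl
  rw [hT, LinearMap.trace_comp_comm']
  set S := T₀ ∘ₗ V.subtype with hS
  let b := stdOrthonormalBasis ℂ V
  rw [LinearMap.trace_eq_matrix_trace ℂ b.toBasis, Matrix.trace]
  have hbound : ∀ i, ‖(LinearMap.toMatrix b.toBasis b.toBasis S).diag i‖ ≤
      ‖LinearMap.toContinuousLinearMap T‖ := by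
    intro i
    have h1 : (LinearMap.toMatrix b.toBasis b.toBasis S).diag i
        = inner (𝕜 := ℂ) ((b i : EuclideanSpace ℂ (Fin p))) (T (b i)) := by
      rw [Matrix.diag_apply, LinearMap.toMatrix_apply, b.coe_toBasis,
        b.coe_toBasis_repr_apply, b.repr_apply_apply]
      rfl
    have hb1 : ‖(b i : EuclideanSpace ℂ (Fin p))‖ = 1 := by
      rw [Submodule.norm_coe]; exact b.orthonormal.1 i
    rw [h1]
    calc ‖inner (𝕜 := ℂ) ((b i : EuclideanSpace ℂ (Fin p))) (T (b i))‖
        ≤ ‖(b i : EuclideanSpace ℂ (Fin p))‖ * ‖T (b i : EuclideanSpace ℂ (Fin p))‖ :=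
          norm_inner_le_norm _ _
      _ = ‖LinearMap.toContinuousLinearMap T (b i : EuclideanSpace ℂ (Fin p))‖ := by
          rw [hb1, one_mul]; rfl
      _ ≤ ‖LinearMap.toContinuousLinearMap T‖ * ‖(b i : EuclideanSpace ℂ (Fin p))‖ :=
          (LinearMap.toContinuousLinearMap T).le_opNorm _
      _ = ‖LinearMap.toContinuousLinearMap T‖ := by rw [hb1, mul_one]
  calc ‖∑ i, (LinearMap.toMatrix b.toBasis b.toBasis S).diag i‖
      ≤ ∑ _i : Fin (Module.finrank ℂ V), ‖LinearMap.toContinuousLinearMap T‖ :=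
        (norm_sum_le _ _).trans (Finset.sum_le_sum fun i _ => hbound i)
    _ = (Module.finrank ℂ V) * ‖LinearMap.toContinuousLinearMap T‖ := by
        rw [Finset.sum_const, Finset.card_univ, Fintype.card_fin, nsmul_eq_mul]

lemma matrix_trace_le_rank_mul_opNorm {p : ℕ} (N : Matrix (Fin p) (Fin p) ℂ) :
    ‖N.trace‖ ≤ N.rank * opNorm N := by
  have htr : N.trace = LinearMap.trace ℂ (EuclideanSpace ℂ (Fin p)) (Matrix.toEuclideanLin N) := by
    rw [LinearMap.trace_eq_matrix_trace ℂ (PiLp.basisFun 2 ℂ (Fin p)),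
      Matrix.toEuclideanLin_eq_toLin, LinearMap.toMatrix_toLin]
  have hrk : N.rank = Module.finrank ℂ (LinearMap.range (Matrix.toEuclideanLin N)) := by
    rw [Matrix.toEuclideanLin_eq_toLin]
    exact N.rank_eq_finrank_range_toLin (PiLp.basisFun 2 ℂ (Fin p)) (PiLp.basisFun 2 ℂ (Fin p))
  rw [htr, hrk]
  exact trace_le_rank_mul_opNorm _

lemma toEuclideanLin_mul {p : ℕ} (M N : Matrix (Fin p) (Fin p) ℂ) :
    Matrix.toEuclideanLin (M * N) =
      (Matrix.toEuclideanLin M) ∘ₗ (Matrix.toEuclideanLin N) := by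
  rw [Matrix.toEuclideanLin_eq_toLin]
  exact Matrix.toLin_mul _ (PiLp.basisFun 2 ℂ (Fin p)) _ M N

lemma toEuclideanLin_one {p : ℕ} :
    Matrix.toEuclideanLin (1 : Matrix (Fin p) (Fin p) ℂ) = LinearMap.id := by
  rw [Matrix.toEuclideanLin_eq_toLin, Matrix.toLin_one]

lemma herm_quant {p : ℕ} (C : Matrix (Fin p) (Fin p) ℂ) (hC : C.IsHermitian) {z : ℂ}
    (hz : 0 < z.im) (y : EuclideanSpace ℂ (Fin p)) :
    z.im * (‖y‖ * ‖y‖) ≤ ‖Matrix.toEuclideanLin (C - z • 1) y‖ * ‖y‖ := by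
  have hsym : (Matrix.toEuclideanLin C).IsSymmetric := Matrix.isHermitian_iff_isSymmetric.1 hC
  set w : ℂ := inner (𝕜 := ℂ) y (Matrix.toEuclideanLin (C - z • 1) y) with hw
  set a : ℂ := inner (𝕜 := ℂ) y (Matrix.toEuclideanLin C y) with ha
  have happ : Matrix.toEuclideanLin (C - z • 1) y = Matrix.toEuclideanLin C y - z • y := by
    rw [map_sub, _root_.map_smul, toEuclideanLin_one]; rfl
  have hreal : a.im = 0 := by
    refine Complex.conj_eq_iff_im.1 ?_
    rw [ha, inner_conj_symm]
    exact hsym y y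
  have hwim : w.im = -(z.im * (‖y‖ * ‖y‖)) := by
    have h3 : w = a - z * ((‖y‖ ^ 2 : ℝ) : ℂ) := by
      rw [hw, happ, inner_sub_right, inner_smul_right, inner_self_eq_norm_sq_to_K, ha,
        Complex.ofReal_pow]
      rfl
    rw [h3, Complex.sub_im, Complex.mul_im, hreal, Complex.ofReal_im, Complex.ofReal_re]
    ring
  have h1 : z.im * (‖y‖ * ‖y‖) ≤ ‖w‖ := by
    have h2 := Complex.abs_im_le_norm w
    rw [hwim] at h2
    calc z.im * (‖y‖ * ‖y‖) ≤ |(-(z.im * (‖y‖ * ‖y‖)))| := by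
          rw [abs_neg, abs_of_nonneg (by positivity)]
      _ ≤ ‖w‖ := h2
  exact h1.trans ((norm_inner_le_norm _ _).trans_eq (mul_comm _ _))

lemma herm_unit {p : ℕ} (C : Matrix (Fin p) (Fin p) ℂ) (hC : C.IsHermitian) {z : ℂ}
    (hz : 0 < z.im) : IsUnit (C - z • 1).det := by
  by_contra h
  have hdet : (C - z • 1).det = 0 := by
    simpa using h
  obtain ⟨v, hv, hmv⟩ := (Matrix.exists_mulVec_eq_zero_iff).2 hdet
  set y : EuclideanSpace ℂ (Fin p) := (WithLp.equiv 2 (Fin p → ℂ)).symm v with hy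
  have h0 : Matrix.toEuclideanLin (C - z • 1) y = 0 := by
    rw [hy, WithLp.equiv_symm_apply, Matrix.toEuclideanLin_apply_piLp_toLp, hmv]
    rfl
  have hkey := herm_quant C hC hz y
  rw [h0, norm_zero, zero_mul] at hkey
  have hy0 : y ≠ 0 := by
    simpa [hy] using hv
  have hyn : 0 < ‖y‖ := norm_pos_iff.2 hy0
  exact absurd hkey (not_le.2 (mul_pos hz (mul_pos hyn hyn)))

lemma herm_resolvent_norm {p : ℕ} (C : Matrix (Fin p) (Fin p) ℂ) (hC : C.IsHermitian) {z : ℂ}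
    (hz : 0 < z.im) : ‖(C - z • 1)⁻¹‖ ≤ (z.im)⁻¹ := by
  have hu := herm_unit C hC hz
  rw [Matrix.l2_opNorm_def, LinearEquiv.trans_apply]
  refine ContinuousLinearMap.opNorm_le_bound _ (by positivity) fun x => ?_
  set y : EuclideanSpace ℂ (Fin p) := Matrix.toEuclideanLin (C - z • 1)⁻¹ x with hy
  have hxy : Matrix.toEuclideanLin (C - z • 1) y = x := by
    rw [hy]
    have h5 : Matrix.toEuclideanLin ((C - z • 1) * (C - z • 1)⁻¹) x = x := by
      rw [Matrix.mul_nonsing_inv _ hu, toEuclideanLin_one]; rfl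
    rw [toEuclideanLin_mul] at h5
    exact h5
  have hkey := herm_quant C hC hz y
  rw [hxy] at hkey
  rcases eq_or_lt_of_le (norm_nonneg y) with h0 | h0
  · rw [show ‖LinearMap.toContinuousLinearMap (Matrix.toEuclideanLin (C - z • 1)⁻¹) x‖ = ‖y‖
      from rfl, ← h0]
    positivity
  · have h1 : (z.im * ‖y‖) * ‖y‖ ≤ ‖x‖ * ‖y‖ := by rw [mul_assoc]; exact hkey
    have h2 : z.im * ‖y‖ ≤ ‖x‖ := le_of_mul_le_mul_right h1 h0
    calc ‖y‖ = z.im⁻¹ * (z.im * ‖y‖) := by field_simp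
      _ ≤ z.im⁻¹ * ‖x‖ := mul_le_mul_of_nonneg_left h2 (by positivity)

lemma renormCov_isHermitian {p n : ℕ} (A : Matrix (Fin p) (Fin p) ℂ) (hA : A.PosSemidef)
    (B : Matrix (Fin n) (Fin n) ℂ) (hB : B.PosSemidef) (X : Matrix (Fin p) (Fin n) ℂ) :
    (renormCov A hA B X).IsHermitian := by
  have hS : hA.sqrt.IsHermitian := by
    unfold Matrix.PosSemidef.sqrt
    simp [Matrix.IsHermitian, Matrix.conjTranspose_mul, Matrix.diagonal_conjTranspose, Matrix.mul_assoc]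
    simp only [Matrix.star_eq_conjTranspose, conjTranspose_conjTranspose]
    congr 3
    funext i
    simp
  have htr : star B.trace = B.trace := by
    rw [← Matrix.trace_conjTranspose, hB.1.eq]
  unfold renormCov
  unfold Matrix.IsHermitian
  simp only [conjTranspose_smul, conjTranspose_sub, conjTranspose_mul, hS.eq, hB.1.eq, hA.1.eq,
    conjTranspose_conjTranspose, star_mul', htr]
  simp [Matrix.mul_assoc, star_inv₀]

lemma rank_add_le' {p n : ℕ} (P Q : Matrix (Fin p) (Fin n) ℂ) :
    (P + Q).rank ≤ P.rank + Q.rank := by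
  classical
  have hr : LinearMap.range (P + Q).mulVecLin ≤
      LinearMap.range P.mulVecLin ⊔ LinearMap.range Q.mulVecLin := by
    rintro x ⟨y, rfl⟩
    rw [Matrix.mulVecLin_add]
    exact Submodule.mem_sup.2 ⟨_, ⟨y, rfl⟩, _, ⟨y, rfl⟩, rfl⟩
  refine (Submodule.finrank_mono hr).trans ?_
  exact Submodule.finrank_add_le_finrank_add_finrank _ _

lemma rank_vecMulVec_le {p n : ℕ} (u : Fin p → ℂ) (d : Fin n → ℂ) :
    (Matrix.vecMulVec u d).rank ≤ 1 := by
  classical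
  rw [Matrix.vecMulVec_eq (Fin 1)]
  exact (Matrix.rank_mul_le_left _ _).trans
    ((Matrix.rank_le_card_width _).trans_eq (by simp))

lemma renormCov_sub_rank {p n : ℕ} (A : Matrix (Fin p) (Fin p) ℂ) (hA : A.PosSemidef)
    (B : Matrix (Fin n) (Fin n) ℂ) (X X' : Matrix (Fin p) (Fin n) ℂ) (i₀ : Fin p)
    (hrow : ∀ i, i ≠ i₀ → X i = X' i) :
    (renormCov A hA B X' - renormCov A hA B X).rank ≤ 2 := by
  classical
  set S := hA.sqrt with hSdef
  set D := X' - X with hD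
  have hDv : D = Matrix.vecMulVec (Pi.single i₀ 1) (X' i₀ - X i₀) := by
    ext i j
    by_cases h : i = i₀
    · subst h; simp [hD, Matrix.vecMulVec_apply, Pi.single_apply]
    · simp [hD, Matrix.vecMulVec_apply, Pi.single_apply, h, hrow i h]
  have hrD : D.rank ≤ 1 := by rw [hDv]; exact _root_.rank_vecMulVec_le _ _
  have hrDH : Dᴴ.rank ≤ 1 := by rw [Matrix.rank_conjTranspose]; exact hrD
  set c : ℂ := (Real.sqrt ((n : ℝ) / p) : ℂ) * (n : ℂ)⁻¹ with hc
  have hΔ : renormCov A hA B X' - renormCov A hA B X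
      = (c • (1 : Matrix (Fin p) (Fin p) ℂ)) *
        (S * D * B * X'ᴴ * S + S * X * B * Dᴴ * S) := by
    unfold renormCov
    rw [Matrix.smul_mul, Matrix.one_mul, hD, Matrix.conjTranspose_sub, hc]
    rw [← smul_sub, sub_sub_sub_cancel_right, ← smul_sub, smul_smul]
    simp only [← hSdef]
    congr 1
    simp only [Matrix.mul_sub, Matrix.sub_mul]
    abel
  rw [hΔ]
  refine (Matrix.rank_mul_le_right _ _).trans ?_
  refine (rank_add_le' _ _).trans ?_
  have h1 : (S * D * B * X'ᴴ * S).rank ≤ 1 := by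
    refine le_trans ?_ hrD
    exact ((Matrix.rank_mul_le_left _ _).trans ((Matrix.rank_mul_le_left _ _).trans
      ((Matrix.rank_mul_le_left _ _).trans (Matrix.rank_mul_le_right _ _))))
  have h2 : (S * X * B * Dᴴ * S).rank ≤ 1 := by
    refine le_trans ?_ hrDH
    exact (Matrix.rank_mul_le_left _ _).trans (Matrix.rank_mul_le_right _ _)
  omega

end Aux

/-- **Row-replacement stability of the normalized resolvent trace.** If `X` and `X'` differ
in at most one row then
`|p⁻¹ tr((C(X) − zI)⁻¹ H) − p⁻¹ tr((C(X') − zI)⁻¹ H)| ≤ 6‖H‖/(p v)`. -/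
theorem row_replacement_resolvent_trace_bound {p n : ℕ} (hp : 0 < p)
    (A : Matrix (Fin p) (Fin p) ℂ) (hA : A.PosSemidef)
    (B : Matrix (Fin n) (Fin n) ℂ) (hB : B.PosSemidef)
    (H : Matrix (Fin p) (Fin p) ℂ)
    (z : ℂ) (hz : 0 < z.im)
    (X X' : Matrix (Fin p) (Fin n) ℂ) (i₀ : Fin p)
    (hrow : ∀ i, i ≠ i₀ → X i = X' i) :
    ‖(p : ℂ)⁻¹ * ((renormCov A hA B X - z • 1)⁻¹ * H).trace
        - (p : ℂ)⁻¹ * ((renormCov A hA B X' - z • 1)⁻¹ * H).trace‖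
      ≤ 6 * opNorm H / (p * z.im) := by
  classical
  open scoped Matrix.Norms.L2Operator in
  set C := renormCov A hA B X with hCdef
  set C' := renormCov A hA B X' with hC'def
  have hC : C.IsHermitian := renormCov_isHermitian A hA B hB X
  have hC' : C'.IsHermitian := renormCov_isHermitian A hA B hB X'
  have hu : IsUnit (C - z • 1).det := herm_unit C hC hz
  have hu' : IsUnit (C' - z • 1).det := herm_unit C' hC' hz
  set R := (C - z • 1)⁻¹ with hR
  set R' := (C' - z • 1)⁻¹ with hR'
  -- resolvent identity
  have hM : R - R' = R * (C' - C) * R' := by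
    have h1 : R * (C' - C) * R' = R * ((C' - z • 1) - (C - z • 1)) * R' := by
      rw [sub_sub_sub_cancel_right]
    rw [h1, Matrix.mul_sub, Matrix.sub_mul, Matrix.mul_assoc R (C' - z • 1) R',
      Matrix.mul_nonsing_inv _ hu', Matrix.mul_one, Matrix.nonsing_inv_mul _ hu,
      Matrix.one_mul]
  -- rank bound
  have hrank : ((R - R') * H).rank ≤ 2 := by
    refine (Matrix.rank_mul_le_left _ _).trans ?_
    rw [hM]
    exact (Matrix.rank_mul_le_left _ _).trans ((Matrix.rank_mul_le_right _ _).trans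
      (renormCov_sub_rank A hA B X X' i₀ hrow))
  -- norm bound
  have hnR : ‖R‖ ≤ z.im⁻¹ := herm_resolvent_norm C hC hz
  have hnR' : ‖R'‖ ≤ z.im⁻¹ := herm_resolvent_norm C' hC' hz
  have hnormH : (0:ℝ) ≤ opNorm H := by rw [opNorm_eq_l2norm]; exact norm_nonneg _
  have hn : ‖(R - R') * H‖ ≤ (z.im⁻¹ + z.im⁻¹) * opNorm H := by
    rw [opNorm_eq_l2norm]
    exact (Matrix.l2_opNorm_mul _ _).trans
      (mul_le_mul_of_nonneg_right ((norm_sub_le R R').trans (add_le_add hnR hnR'))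
        (norm_nonneg H))
  -- trace bound
  have htr : ‖((R - R') * H).trace‖ ≤ 2 * ((z.im⁻¹ + z.im⁻¹) * opNorm H) := by
    refine (matrix_trace_le_rank_mul_opNorm _).trans ?_
    rw [opNorm_eq_l2norm]
    refine mul_le_mul ?_ hn (norm_nonneg _) (by norm_num)
    exact_mod_cast hrank
  -- assemble
  have hsplit : (p : ℂ)⁻¹ * (R * H).trace - (p : ℂ)⁻¹ * (R' * H).trace
      = (p : ℂ)⁻¹ * ((R - R') * H).trace := by
    rw [Matrix.sub_mul, Matrix.trace_sub, mul_sub]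
  rw [hsplit, norm_mul, norm_inv, Complex.norm_natCast]
  have hfinal : (p : ℝ)⁻¹ * (2 * ((z.im⁻¹ + z.im⁻¹) * opNorm H))
      ≤ 6 * opNorm H / (p * z.im) := by
    have hpp : (0:ℝ) < p := by exact_mod_cast hp
    have he : (p : ℝ)⁻¹ * (2 * ((z.im⁻¹ + z.im⁻¹) * opNorm H))
        = 4 * opNorm H / (p * z.im) := by
      field_simp
      ring
    rw [he]
    apply div_le_div_of_nonneg_right ?_ (by positivity)
    · linarith
  refine le_trans ?_ hfinal
  exact mul_le_mul_of_nonneg_left htr (by positivity)
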